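/- Let L be a dually ms Stone semi-Heyting algebra. Then for all x in L, x**′ = x*′*. -/
import Mathlib


class SemiHeyting (α : Type*) extends Lattice α, BoundedOrder α where
  himp : α → α → α
  sh1 : ∀ x y : α, x ⊓ himp x y = x ⊓ y
  sh2 : ∀ x y z : α, x ⊓ himp y z = x ⊓ himp (x ⊓ y) (x ⊓ z)
  sh3 : ∀ x : α, himp x x = ⊤

namespace SemiHeyting

variable {α : Type*} [SemiHeyting α]

def star (x : α) : α := himp x ⊥

end SemiHeyting

class DQD (α : Type*) extends SemiHeyting α where
  prime : α → α
  prime_bot : prime ⊥ = ⊤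
  prime_top : prime ⊤ = ⊥
  prime_inf : ∀ x y : α, prime (x ⊓ y) = prime x ⊔ prime y
  prime_prime_sup : ∀ x y : α, prime (prime (x ⊔ y)) = prime (prime x) ⊔ prime (prime y)
  prime_prime_le : ∀ x : α, prime (prime x) ≤ x

class DmsSt (α : Type*) extends DQD α where
  stone : ∀ x : α, SemiHeyting.star x ⊔ SemiHeyting.star (SemiHeyting.star x) = ⊤
  jdm : ∀ x y : α, prime (x ⊔ y) = prime x ⊓ prime y

open SemiHeyting DQD

section Aux
variable {α : Type*} [SemiHeyting α]

lemma adj_back {x y w : α} (h : x ⊓ y ≤ w) : y ≤ SemiHeyting.himp x (x ⊓ w) := by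
  have h2 := SemiHeyting.sh2 y x (x ⊓ w)
  have hxw : y ⊓ (x ⊓ w) = y ⊓ x := by
    have hle : y ⊓ x ≤ w := by rw [inf_comm]; exact h
    rw [← inf_assoc]
    exact le_antisymm inf_le_left (le_inf le_rfl hle)
  calc y = y ⊓ SemiHeyting.himp (y ⊓ x) (y ⊓ (x ⊓ w)) := by
            rw [hxw, SemiHeyting.sh3, inf_top_eq]
       _ = y ⊓ SemiHeyting.himp x (x ⊓ w) := (h2).symm
       _ ≤ _ := inf_le_right

lemma distrib_le (x y z : α) : x ⊓ (y ⊔ z) ≤ (x ⊓ y) ⊔ (x ⊓ z) := by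
  set w := (x ⊓ y) ⊔ (x ⊓ z) with hw
  have hy : y ≤ SemiHeyting.himp x (x ⊓ w) := adj_back le_sup_left
  have hz : z ≤ SemiHeyting.himp x (x ⊓ w) := adj_back le_sup_right
  calc x ⊓ (y ⊔ z) ≤ x ⊓ SemiHeyting.himp x (x ⊓ w) :=
        inf_le_inf_left x (sup_le hy hz)
    _ = x ⊓ (x ⊓ w) := SemiHeyting.sh1 x (x ⊓ w)
    _ ≤ w := inf_le_of_right_le inf_le_right

lemma le_star_of_inf_bot {x y : α} (h : x ⊓ y = ⊥) : y ≤ SemiHeyting.star x := by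
  have := adj_back (w := ⊥) (x := x) (y := y) (h ▸ le_rfl)
  simpa [SemiHeyting.star, inf_bot_eq] using this

lemma inf_star (x : α) : x ⊓ SemiHeyting.star x = ⊥ := by
  simpa [SemiHeyting.star, inf_bot_eq] using SemiHeyting.sh1 x ⊥

end Aux

theorem stmt12 {α : Type*} [DmsSt α] (x : α) :
    DQD.prime (SemiHeyting.star (SemiHeyting.star x))
      = SemiHeyting.star (DQD.prime (SemiHeyting.star x)) := by
  set a := SemiHeyting.star x with ha
  have h1 : a ⊔ SemiHeyting.star a = ⊤ := DmsSt.stone x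
  have h2 : a ⊓ SemiHeyting.star a = ⊥ := inf_star a
  have h3 : DQD.prime a ⊓ DQD.prime (SemiHeyting.star a) = ⊥ := by
    rw [← DmsSt.jdm, h1, DQD.prime_top]
  have h4 : DQD.prime a ⊔ DQD.prime (SemiHeyting.star a) = ⊤ := by
    rw [← DQD.prime_inf, h2, DQD.prime_bot]
  apply le_antisymm
  · exact le_star_of_inf_bot h3
  · calc SemiHeyting.star (DQD.prime a)
        = SemiHeyting.star (DQD.prime a) ⊓
            (DQD.prime a ⊔ DQD.prime (SemiHeyting.star a)) := by rw [h4, inf_top_eq]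
      _ ≤ (SemiHeyting.star (DQD.prime a) ⊓ DQD.prime a) ⊔
            (SemiHeyting.star (DQD.prime a) ⊓ DQD.prime (SemiHeyting.star a)) :=
          distrib_le _ _ _
      _ ≤ DQD.prime (SemiHeyting.star a) := by
          rw [inf_comm, inf_star]
          exact sup_le bot_le inf_le_right
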